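/- Let f be a C^r function (1 ≤ r ≤ ∞) defined on an open set I' ⊆ ℝ whose derivative is nonzero at every point of a closed bounded interval I ⊂ I'. Then the restriction of f to I extends to a C^r function on all of ℝ whose derivative is nonzero everywhere. -/

import Mathlib

open Set
open scoped Manifold ContDiff

lemma mul_contDiff_of_tsupport {s : WithTop ℕ∞} {χ h : ℝ → ℝ} {U : Set ℝ}
    (hU : IsOpen U) (hχ : ContDiff ℝ s χ) (hsupp : tsupport χ ⊆ U)
    (hh : ContDiffOn ℝ s h U) : ContDiff ℝ s (fun x => χ x * h x) := by
  rw [← contDiffOn_univ]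
  intro x _
  by_cases hx : x ∈ U
  · exact ((hχ.contDiffAt.mul (((hh x hx).contDiffAt (hU.mem_nhds hx)))).contDiffWithinAt)
  · have hx' : x ∈ (tsupport χ)ᶜ := fun hc => hx (hsupp hc)
    have hev : (fun x => χ x * h x) =ᶠ[nhds x] fun _ => 0 := by
      filter_upwards [(isClosed_tsupport χ).isOpen_compl.mem_nhds hx'] with y hy
      simp [image_eq_zero_of_notMem_tsupport hy]
    exact (contDiffAt_const.congr_of_eventuallyEq hev).contDiffWithinAt

lemma extend_pos_deriv {r : ℕ∞} (hr : 1 ≤ r)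
    (I' : Set ℝ) (hI' : IsOpen I') (f : ℝ → ℝ) (hf : ContDiffOn ℝ r f I')
    (a b : ℝ) (hab : a ≤ b) (hIc : Set.Icc a b ⊆ I')
    (hpos : ∀ t ∈ Set.Icc a b, 0 < deriv f t) :
    ∃ g : ℝ → ℝ, ContDiff ℝ r g ∧ Set.EqOn f g (Set.Icc a b) ∧
      ∀ t : ℝ, deriv g t ≠ 0 := by
  -- r = m + 1
  obtain ⟨m, hm⟩ : ∃ m : ℕ∞, (r : WithTop ℕ∞) = (m : WithTop ℕ∞) + 1 := by
    induction r using ENat.recTopCoe with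
    | top => exact ⟨⊤, rfl⟩
    | coe n =>
      obtain ⟨k, rfl⟩ : ∃ k, n = k + 1 := by
        cases n with
        | zero => simp at hr
        | succ k => exact ⟨k, rfl⟩
      exact ⟨(k : ℕ∞), by push_cast; ring⟩
  have hm1 : (m : WithTop ℕ∞) + 1 ≤ (r : WithTop ℕ∞) := le_of_eq hm.symm
  have hDcd : ContDiffOn ℝ m (deriv f) I' := hf.deriv_of_isOpen hI' hm1
  have hDcont : ContinuousOn (deriv f) I' := hf.continuousOn_deriv_of_isOpen hI' (by exact_mod_cast hr)
  -- the open set where deriv f > 0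
  set U : Set ℝ := I' ∩ deriv f ⁻¹' Set.Ioi 0 with hU_def
  have hUopen : IsOpen U := hDcont.isOpen_inter_preimage hI' isOpen_Ioi
  have hIU : Set.Icc a b ⊆ U := fun x hx => ⟨hIc hx, hpos x hx⟩
  -- shrink: V open, Icc ⊆ V, closure V ⊆ U
  obtain ⟨V, hVopen, hIV, hVU⟩ := normal_exists_closure_subset isClosed_Icc hUopen hIU
  -- smooth cutoff
  obtain ⟨χ, hχ0, hχ1, hχ01⟩ :=
    exists_contMDiffMap_zero_one_of_isClosed (𝓘(ℝ, ℝ)) (n := ⊤) (isOpen_compl_iff.mp (by simpa using hVopen))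
      isClosed_Icc (disjoint_compl_left_iff_subset.mpr hIV)
  have hχsmooth : ContDiff ℝ (m : WithTop ℕ∞) χ :=
    (contMDiff_iff_contDiff.mp χ.contMDiff).of_le (by exact_mod_cast le_top)
  have hχsupp : tsupport χ ⊆ U := by
    apply Subset.trans _ hVU
    apply closure_mono
    intro x hx
    by_contra hxV
    exact hx (hχ0 hxV)
  -- φ
  set φ : ℝ → ℝ := fun x => χ x * deriv f x + (1 - χ x) with hφ_def
  have hφcd : ContDiff ℝ (m : WithTop ℕ∞) φ :=
    (mul_contDiff_of_tsupport hUopen hχsmooth hχsupp (hDcd.mono inter_subset_left)).add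
      (contDiff_const.sub hχsmooth)
  have hφpos : ∀ x, 0 < φ x := by
    intro x
    rcases eq_or_lt_of_le (hχ01 x).1 with h0 | h0
    · simp [hφ_def, ← h0]
    · have hxU : x ∈ U := hχsupp (subset_closure h0.ne')
      have hD : 0 < deriv f x := hxU.2
      have h2 : 0 < χ x * deriv f x := mul_pos h0 hD
      show 0 < χ x * deriv f x + (1 - χ x)
      nlinarith [(hχ01 x).2]
  have hφcont : Continuous φ := hφcd.continuous
  -- g
  set g : ℝ → ℝ := fun x => f a + ∫ t in a..x, φ t with hg_def
  have hgderiv : ∀ x, HasDerivAt g (φ x) x := by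
    intro x
    exact (HasStrictDerivAt.const_add (f a)
      (hφcont.integral_hasStrictDerivAt a x)).hasDerivAt
  have hgd : ∀ x, deriv g x = φ x := fun x => (hgderiv x).deriv
  have hgdiff : Differentiable ℝ g := fun x => (hgderiv x).differentiableAt
  refine ⟨g, ?_, ?_, ?_⟩
  · -- smoothness
    rw [show ((r : WithTop ℕ∞)) = (m : WithTop ℕ∞) + 1 from hm, contDiff_succ_iff_deriv]
    refine ⟨hgdiff, ?_, ?_⟩
    · intro h
      exact absurd h (by exact_mod_cast WithTop.coe_ne_top)
    · have : deriv g = φ := funext hgd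
      rw [this]; exact hφcd
  · -- EqOn
    intro x hx
    refine eq_of_has_deriv_right_eq (f' := fun y => deriv f y)
      (fun y hy => ?_) (fun y hy => ?_) (hf.continuousOn.mono hIc)
      hgdiff.continuous.continuousOn ?_ x hx
    · have hy' : y ∈ I' := hIc ⟨hy.1, hy.2.le⟩
      have : DifferentiableAt ℝ f y :=
        (hf.contDiffAt (hI'.mem_nhds hy')).differentiableAt (by exact_mod_cast (Order.one_le_iff_ne_zero.mp hr))
      exact this.hasDerivAt.hasDerivWithinAt
    · have hfy : φ y = deriv f y := by
        have := hχ1 (⟨hy.1, hy.2.le⟩ : y ∈ Set.Icc a b)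
        simp [hφ_def, this]
      show HasDerivWithinAt g (deriv f y) (Ici y) y
      rw [← hfy]
      exact (hgderiv y).hasDerivWithinAt
    · simp [hg_def]
  · intro t
    rw [hgd t]
    exact (hφpos t).ne'

/-- A `C^r` function (`1 ≤ r`) defined on an open set `I'` whose derivative is nonzero
at every point of a compact interval `[a,b] ⊆ I'` extends from `[a,b]` to a `C^r`
function on all of `ℝ` with everywhere nonzero derivative. -/
theorem extend_nonvanishing_deriv {r : ℕ∞} (hr : 1 ≤ r)
    (I' : Set ℝ) (hI' : IsOpen I') (f : ℝ → ℝ) (hf : ContDiffOn ℝ r f I')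
    (a b : ℝ) (hab : a ≤ b) (hIc : Set.Icc a b ⊆ I')
    (hderiv : ∀ t ∈ Set.Icc a b, deriv f t ≠ 0) :
    ∃ g : ℝ → ℝ, ContDiff ℝ r g ∧ Set.EqOn f g (Set.Icc a b) ∧
      ∀ t : ℝ, deriv g t ≠ 0 := by
  have hcont : ContinuousOn (deriv f) (Set.Icc a b) :=
    (hf.continuousOn_deriv_of_isOpen hI' (by exact_mod_cast hr)).mono hIc
  -- constant sign
  have hsign : (∀ t ∈ Set.Icc a b, 0 < deriv f t) ∨ (∀ t ∈ Set.Icc a b, deriv f t < 0) := by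
    by_contra hcon
    push_neg at hcon
    obtain ⟨⟨t0, ht0, ht0'⟩, ⟨t1, ht1, ht1'⟩⟩ := hcon
    have h0 : deriv f t0 < 0 := lt_of_le_of_ne ht0' (hderiv t0 ht0)
    have h1 : 0 < deriv f t1 := lt_of_le_of_ne ht1' (Ne.symm (hderiv t1 ht1))
    have hsub : Set.uIcc t0 t1 ⊆ Set.Icc a b := Set.uIcc_subset_Icc ht0 ht1
    have h00 : (0 : ℝ) ∈ deriv f '' Set.uIcc t0 t1 :=
      intermediate_value_uIcc (hcont.mono hsub) (Set.mem_uIcc.mpr (Or.inl ⟨h0.le, h1.le⟩))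
    obtain ⟨c, hc, hc0⟩ := h00
    exact hderiv c (hsub hc) hc0
  rcases hsign with hs | hs
  · exact extend_pos_deriv hr I' hI' f hf a b hab hIc hs
  · obtain ⟨g, hg1, hg2, hg3⟩ := extend_pos_deriv hr I' hI' (fun x => -f x) hf.neg a b hab hIc
      (fun t ht => by rw [deriv.fun_neg]; linarith [hs t ht])
    refine ⟨fun x => -g x, hg1.neg, fun x hx => ?_, fun t => ?_⟩
    · have := hg2 hx
      simp only at this
      simp [← this]
    · rw [deriv.fun_neg]
      simpa using hg3 t
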